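/- For Ω ∈ 𝕊^N with Im(Ω(1)·conj(Ω(0))) ≠ 0, define the symmetry-breaking map B(Ω) as follows: first set Ω' = conj(Ω(0))·Ω (so Ω'(0) = 1); then output Ω' if Im(Ω'(1)) > 0, and conj(Ω') otherwise. Then B(Ω) lies in H = {Ω : Ω(0) = 1, Im(Ω(1)) > 0}, B(Ω) is in the {±1}×𝕊-orbit of Ω, and B is constant on orbits: B(z·Ω) = B(Ω) and B(z·conj(Ω)) = B(Ω) for all z ∈ 𝕊. -/

import Mathlib

open Classical in
/-- The symmetry-breaking map: first transfer the global phase so that the 0-th entry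
becomes 1, then conjugate (entrywise inversion on the circle) if the imaginary part of
the 1st entry is not positive. -/
noncomputable def breakMap {N : ℕ} (hN : 2 ≤ N) (Ω : Fin N → Circle) : Fin N → Circle :=
  let Ω' : Fin N → Circle := fun j => (Ω ⟨0, by omega⟩)⁻¹ * Ω j
  if 0 < ((Ω' ⟨1, by omega⟩ : ℂ)).im then Ω' else fun j => (Ω' j)⁻¹

open Classical in
noncomputable def breakAux {N : ℕ} (hN : 2 ≤ N) (g : Fin N → Circle) : Fin N → Circle :=
  if 0 < ((g ⟨1, by omega⟩ : ℂ)).im then g else fun j => (g j)⁻¹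

theorem breakMap_spec {N : ℕ} (hN : 2 ≤ N) (Ω : Fin N → Circle)
    (h : ((Ω ⟨1, by omega⟩ : ℂ) * starRingEnd ℂ (Ω ⟨0, by omega⟩ : ℂ)).im ≠ 0) :
    ((breakMap hN Ω ⟨0, by omega⟩ : ℂ) = 1 ∧
      0 < ((breakMap hN Ω ⟨1, by omega⟩ : ℂ)).im) ∧
    (∃ z : Circle, (breakMap hN Ω = fun j => z * Ω j) ∨
      (breakMap hN Ω = fun j => z * (Ω j)⁻¹)) ∧
    (∀ z : Circle, breakMap hN (fun j => z * Ω j) = breakMap hN Ω) ∧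
    (∀ z : Circle, breakMap hN (fun j => z * (Ω j)⁻¹) = breakMap hN Ω) := by
  classical
  have i0 : Fin N := ⟨0, by omega⟩
  set Ω' : Fin N → Circle := fun j => (Ω ⟨0, by omega⟩)⁻¹ * Ω j with hΩ'
  have hF : ∀ Λ : Fin N → Circle,
      breakMap hN Λ = breakAux hN (fun j => (Λ ⟨0, by omega⟩)⁻¹ * Λ j) := fun _ => rfl
  have him : ((Ω' ⟨1, by omega⟩ : ℂ)).im
      = ((Ω ⟨1, by omega⟩ : ℂ) * starRingEnd ℂ (Ω ⟨0, by omega⟩ : ℂ)).im := by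
    simp only [hΩ', Circle.coe_mul, ← Circle.coe_inv, Circle.coe_inv_eq_conj]
    ring_nf
  have him0 : ((Ω' ⟨1, by omega⟩ : ℂ)).im ≠ 0 := by rw [him]; exact h
  have hb : breakMap hN Ω = breakAux hN Ω' := hF Ω
  have hΩ'0 : (Ω' ⟨0, by omega⟩ : ℂ) = 1 := by simp [hΩ']
  -- key lemma about breakAux and inversion
  have hinv : breakAux hN (fun j => (Ω' j)⁻¹) = breakAux hN Ω' := by
    unfold breakAux
    have himinv : (((Ω' ⟨1, by omega⟩)⁻¹ : Circle) : ℂ).im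
        = -((Ω' ⟨1, by omega⟩ : ℂ)).im := by
      simp [← Circle.coe_inv, Circle.coe_inv_eq_conj]
    by_cases hpos : 0 < ((Ω' ⟨1, by omega⟩ : ℂ)).im
    · have h1 : ¬ 0 < (((fun j => (Ω' j)⁻¹) ⟨1, by omega⟩ : Circle) : ℂ).im := by
        simp only [himinv]; linarith
      rw [if_neg h1, if_pos hpos]
      funext j; simp
    · have hneg : ((Ω' ⟨1, by omega⟩ : ℂ)).im < 0 :=
        lt_of_le_of_ne (not_lt.1 hpos) him0
      have h1 : 0 < (((fun j => (Ω' j)⁻¹) ⟨1, by omega⟩ : Circle) : ℂ).im := by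
        simp only [himinv]; linarith
      rw [if_pos h1, if_neg hpos]
  refine ⟨?_, ?_, ?_, ?_⟩
  · rw [hb]; unfold breakAux
    by_cases hpos : 0 < ((Ω' ⟨1, by omega⟩ : ℂ)).im
    · rw [if_pos hpos]; exact ⟨hΩ'0, hpos⟩
    · have hneg : ((Ω' ⟨1, by omega⟩ : ℂ)).im < 0 :=
        lt_of_le_of_ne (not_lt.1 hpos) him0
      rw [if_neg hpos]
      constructor
      · simp [← Circle.coe_inv, Circle.coe_inv_eq_conj, hΩ'0]
      · simp only [← Circle.coe_inv, Circle.coe_inv_eq_conj, Complex.conj_im]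
        linarith
  · rw [hb]; unfold breakAux
    by_cases hpos : 0 < ((Ω' ⟨1, by omega⟩ : ℂ)).im
    · exact ⟨(Ω ⟨0, by omega⟩)⁻¹, Or.inl (by rw [if_pos hpos])⟩
    · refine ⟨Ω ⟨0, by omega⟩, Or.inr ?_⟩
      rw [if_neg hpos]
      funext j
      simp [hΩ', mul_inv, mul_comm]
  · intro z
    have e : (fun j => ((z * Ω ⟨0, by omega⟩)⁻¹ * (z * Ω j))) = Ω' := by
      funext j
      show (z * Ω ⟨0, by omega⟩)⁻¹ * (z * Ω j) = _
      rw [mul_inv, mul_mul_mul_comm, inv_mul_cancel, one_mul]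
    rw [hF (fun j => z * Ω j), hb, e]
  · intro z
    have e : (fun j => ((z * (Ω ⟨0, by omega⟩)⁻¹)⁻¹ * (z * (Ω j)⁻¹)))
        = fun j => (Ω' j)⁻¹ := by
      funext j
      show (z * (Ω ⟨0, by omega⟩)⁻¹)⁻¹ * (z * (Ω j)⁻¹)
        = ((Ω ⟨0, by omega⟩)⁻¹ * Ω j)⁻¹
      rw [mul_inv, inv_inv, mul_mul_mul_comm, inv_mul_cancel, one_mul,
        mul_inv, inv_inv]
    rw [hF (fun j => z * (Ω j)⁻¹), hb, ← hinv, e]
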